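/- The improvement operation is idempotent: impr(impr(G)) = impr(G) for every graph G. -/

import Mathlib

variable {V : Type*}

/-- `(T, bags)` is a tree decomposition of `G`. -/
def IsTreeDecomp {ι : Type*} (G : SimpleGraph V) (T : SimpleGraph ι) (bags : ι → Set V) : Prop :=
  T.IsTree ∧
  (∀ v : V, (T.induce {n : ι | v ∈ bags n}).Connected) ∧
  (∀ u v : V, G.Adj u v → ∃ n : ι, u ∈ bags n ∧ v ∈ bags n)

/-- `G` has tree width at most `k`. -/
def TwLE (G : SimpleGraph V) (k : ℕ) : Prop :=
  ∃ (ι : Type) (T : SimpleGraph ι) (bags : ι → Set V),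
    IsTreeDecomp G T bags ∧ ∀ n : ι, (bags n).ncard ≤ k + 1

/-- The tree width of `G`. -/
noncomputable def tw (G : SimpleGraph V) : ℕ := sInf {k : ℕ | TwLE G k}

/-- `C` separates `x` and `y` in `G`. -/
def Separates (G : SimpleGraph V) (C : Set V) (x y : V) : Prop :=
  x ∉ C ∧ y ∉ C ∧ ∀ p : G.Walk x y, ∃ z ∈ C, z ∈ p.support

/-- The improved graph `impr G`: an edge is added between every pair of distinct
vertices `u`, `v` with `κ_G(u,v) > tw G`, i.e. such that no vertex set of size at
most `tw G` separates `u` from `v`. -/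
noncomputable def impr (G : SimpleGraph V) : SimpleGraph V where
  Adj u v := u ≠ v ∧
    (G.Adj u v ∨ ∀ S : Set V, S.ncard ≤ tw G → ¬ Separates G S u v)
  symm := by
    constructor
    rintro u v ⟨h1, h2⟩
    refine ⟨h1.symm, ?_⟩
    rcases h2 with h | h
    · exact Or.inl h.symm
    · refine Or.inr fun S hS hsep => h S hS ?_
      obtain ⟨hv, hu, hp⟩ := hsep
      refine ⟨hu, hv, fun p => ?_⟩
      obtain ⟨z, hz, hzs⟩ := hp p.reverse
      exact ⟨z, hz, by simpa [SimpleGraph.Walk.support_reverse] using hzs⟩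
  loopless := by constructor; rintro u ⟨h, -⟩; exact h rfl

lemma adj_impr_of_adj {G : SimpleGraph V} {u v : V} (h : G.Adj u v) : (impr G).Adj u v :=
  ⟨h.ne, Or.inl h⟩

/-- Any graph on a finite vertex type has tree width at most `card V`. -/
lemma twLE_card [Fintype V] (G : SimpleGraph V) : TwLE G (Fintype.card V) := by
  refine ⟨Unit, ⊥, fun _ => Set.univ, ⟨⟨?_, ?_⟩, ?_, ?_⟩, ?_⟩
  · constructor
    intro a b
    cases a; cases b
    exact SimpleGraph.Reachable.refl _
  · intro v c hc
    cases c with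
    | nil => simpa using hc.three_le_length
    | cons h _ => exact h.elim
  · intro v
    have : Nonempty ({n : Unit | v ∈ (fun _ => (Set.univ : Set V)) n}) := ⟨⟨(), Set.mem_univ v⟩⟩
    constructor
    intro a b
    have : a = b := Subtype.ext (by cases a.1; cases b.1; rfl)
    exact this ▸ SimpleGraph.Reachable.refl a
  · intro u v _
    exact ⟨(), Set.mem_univ u, Set.mem_univ v⟩
  · intro _
    simp [Set.ncard_univ]

lemma twLE_of_impr [Fintype V] {G : SimpleGraph V} {k : ℕ} (h : TwLE (impr G) k) :
    TwLE G k := by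
  obtain ⟨ι, T, bags, ⟨ht, hc, he⟩, hcard⟩ := h
  exact ⟨ι, T, bags, ⟨ht, hc, fun u v huv => he u v (adj_impr_of_adj huv)⟩, hcard⟩

lemma tw_le_tw_impr [Fintype V] (G : SimpleGraph V) : tw G ≤ tw (impr G) := by
  have hne : {k : ℕ | TwLE (impr G) k}.Nonempty := ⟨_, twLE_card (impr G)⟩
  have hmem : TwLE (impr G) (tw (impr G)) := Nat.sInf_mem hne
  exact Nat.sInf_le (twLE_of_impr hmem)

/-- If a walk in `impr G` avoids `S` (a set of size at most `tw G`),
then there is a walk in `G` with the same endpoints avoiding `S`. -/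
lemma walk_avoid [Fintype V] {G : SimpleGraph V} {S : Set V} (hS : S.ncard ≤ tw G) :
    ∀ {a b : V} (p : (impr G).Walk a b), (∀ z ∈ S, z ∉ p.support) →
      ∃ q : G.Walk a b, ∀ z ∈ S, z ∉ q.support := by
  intro a b p
  induction p with
  | nil => exact fun h => ⟨SimpleGraph.Walk.nil, h⟩
  | @cons a c b h p ih =>
    intro hdisj
    have ha : a ∉ S := fun hs => hdisj a hs (by simp)
    have hc : c ∉ S := fun hs => hdisj c hs (by simp)
    have hd' : ∀ z ∈ S, z ∉ p.support := fun z hz hmem =>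
      hdisj z hz (by simp [SimpleGraph.Walk.support_cons, hmem])
    obtain ⟨q', hq'⟩ := ih hd'
    rcases h.2 with hadj | hall
    · refine ⟨SimpleGraph.Walk.cons hadj q', fun z hz => ?_⟩
      simp only [SimpleGraph.Walk.support_cons, List.mem_cons]
      rintro (rfl | hmem)
      · exact ha hz
      · exact hq' z hz hmem
    · have hnsep := hall S hS
      have : ∃ q : G.Walk a c, ∀ z ∈ S, z ∉ q.support := by
        by_contra hno
        push_neg at hno
        exact hnsep ⟨ha, hc, fun p' => by
          obtain ⟨z, hz1, hz2⟩ := hno p'; exact ⟨z, hz1, hz2⟩⟩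
      obtain ⟨q, hq⟩ := this
      refine ⟨q.append q', fun z hz hmem => ?_⟩
      rw [SimpleGraph.Walk.mem_support_append_iff] at hmem
      rcases hmem with h1 | h1
      · exact hq z hz h1
      · exact hq' z hz h1

/-- The improvement operation is idempotent. -/
theorem stmt10 [Fintype V] (G : SimpleGraph V) :
    impr (impr G) = impr G := by
  ext u v
  constructor
  · rintro ⟨hne, h | h⟩
    · exact h
    · refine ⟨hne, Or.inr fun S hScard hsep => ?_⟩
      have hcard' : S.ncard ≤ tw (impr G) := le_trans hScard (tw_le_tw_impr G)
      refine h S hcard' ⟨hsep.1, hsep.2.1, fun p => ?_⟩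
      by_contra hno
      push_neg at hno
      obtain ⟨q, hq⟩ := walk_avoid hScard p hno
      obtain ⟨z, hz1, hz2⟩ := hsep.2.2 q
      exact hq z hz1 hz2
  · intro h
    exact ⟨h.1, Or.inl h⟩
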